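/- For every ε > 0 there exists a measurable set Ω ⊆ ℂ with infinite Lebesgue measure such that for every entire function f : ℂ → ℂ, ∫_Ω |f(z)|² e^{−π|z|²} dA(z) ≤ ε · ∫_ℂ |f(z)|² e^{−π|z|²} dA(z). -/

import Mathlib

open MeasureTheory Set Metric intervalIntegral
open scoped Real ENNReal

theorem lintegral_comp_polarCoord_symm_aux (g : ℝ × ℝ → ℝ≥0∞) :
    (∫⁻ p in polarCoord.target, ENNReal.ofReal p.1 * g (polarCoord.symm p)) = ∫⁻ p, g p := by
  set B : ℝ × ℝ → ℝ × ℝ →L[ℝ] ℝ × ℝ := fun p =>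
    LinearMap.toContinuousLinearMap (Matrix.toLin (Module.Basis.finTwoProd ℝ) (Module.Basis.finTwoProd ℝ)
      !![Real.cos p.2, -p.1 * Real.sin p.2; Real.sin p.2, p.1 * Real.cos p.2])
  have A : ∀ p ∈ polarCoord.target, HasFDerivWithinAt polarCoord.symm (B p) polarCoord.target p :=
    fun p _ => (hasFDerivAt_polarCoord_symm p).hasFDerivWithinAt
  have B_det : ∀ p, (B p).det = p.1 := by
    intro p
    conv_rhs => rw [← one_mul p.1, ← Real.cos_sq_add_sin_sq p.2]
    simp only [B, neg_mul, LinearMap.det_toContinuousLinearMap, LinearMap.det_toLin,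
      Matrix.det_fin_two_of, sub_neg_eq_add]
    ring
  have hinj : Set.InjOn polarCoord.symm polarCoord.target := polarCoord.symm.injOn
  have himg : polarCoord.symm '' polarCoord.target = polarCoord.source :=
    polarCoord.symm_image_target_eq_source
  symm
  calc
    ∫⁻ p, g p = ∫⁻ p in polarCoord.source, g p := by
      rw [← setLIntegral_univ]
      exact setLIntegral_congr polarCoord_source_ae_eq_univ.symm
    _ = ∫⁻ p in polarCoord.target, ENNReal.ofReal |(B p).det| * g (polarCoord.symm p) := by
      rw [← himg]
      exact lintegral_image_eq_lintegral_abs_det_fderiv_mul volume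
        polarCoord.open_target.measurableSet A hinj g
    _ = ∫⁻ p in polarCoord.target, ENNReal.ofReal p.1 * g (polarCoord.symm p) := by
      apply setLIntegral_congr_fun polarCoord.open_target.measurableSet
      intro p hp
      beta_reduce
      rw [B_det, abs_of_pos hp.1]

theorem Complex.lintegral_comp_polarCoord_symm_aux (g : ℂ → ℝ≥0∞) :
    (∫⁻ p in polarCoord.target, ENNReal.ofReal p.1 * g (Complex.polarCoord.symm p))
      = ∫⁻ z, g z := by
  rw [← (Complex.volume_preserving_equiv_real_prod.symm).lintegral_comp_emb
    Complex.measurableEquivRealProd.symm.measurableEmbedding, ← _root_.lintegral_comp_polarCoord_symm_aux]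
  rfl

theorem circle_submean {h : ℂ → ℂ} (hd : Differentiable ℂ h) (z : ℂ) {r : ℝ} (hr : 0 < r) :
    2 * π * ‖h z‖ ≤ ∫ θ in (0:ℝ)..(2*π), ‖h (circleMap z r θ)‖ := by
  have key : (∮ w in C(z, r), (w - z)⁻¹ • h w) = (2 * π * Complex.I : ℂ) • h z :=
    Complex.circleIntegral_sub_center_inv_smul_of_differentiable_on_off_countable hr
      countable_empty hd.continuous.continuousOn (fun w _ => hd w)
  rw [circleIntegral] at key
  have hint : ∀ θ : ℝ, deriv (circleMap z r) θ • (circleMap z r θ - z)⁻¹ • h (circleMap z r θ)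
      = Complex.I • h (circleMap z r θ) := by
    intro θ
    rw [deriv_circleMap, circleMap_sub_center]
    rw [smul_smul]
    congr 1
    rw [mul_comm, ← mul_assoc, inv_mul_cancel₀ (circleMap_ne_center hr.ne')]
    · rw [one_mul]
  simp only [hint] at key
  rw [intervalIntegral.integral_smul] at key
  have h2 : (∫ θ in (0:ℝ)..(2*π), h (circleMap z r θ)) = (2 * π : ℂ) • h z := by
    have hI : (Complex.I : ℂ) ≠ 0 := Complex.I_ne_zero
    have := congrArg (fun x => Complex.I⁻¹ • x) key
    simp only [smul_smul, inv_mul_cancel₀ hI, one_smul] at this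
    rw [this]
    rw [mul_comm Complex.I⁻¹, mul_assoc, mul_inv_cancel₀ hI, mul_one]
  have : ‖(2 * π : ℂ) • h z‖ ≤ ∫ θ in (0:ℝ)..(2*π), ‖h (circleMap z r θ)‖ := by
    rw [← h2]
    exact intervalIntegral.norm_integral_le_integral_norm Real.two_pi_pos.le
  calc 2 * π * ‖h z‖ = ‖(2 * π : ℂ) • h z‖ := by
        rw [norm_smul]
        simp [Complex.norm_real, abs_of_pos Real.pi_pos, abs_of_pos Real.two_pi_pos]
    _ ≤ _ := this

theorem ball_submean {h : ℂ → ℂ} (hd : Differentiable ℂ h) (z : ℂ) :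
    ENNReal.ofReal (π * ‖h z‖) ≤ ∫⁻ w in ball z 1, ENNReal.ofReal ‖h w‖ := by
  have hcont : Continuous h := hd.continuous
  set g : ℂ → ℝ≥0∞ :=
    fun w => (ball (0:ℂ) 1).indicator (fun w => ENNReal.ofReal ‖h (z + w)‖) w with hg
  have step1 : ∫⁻ w in ball z 1, ENNReal.ofReal ‖h w‖ = ∫⁻ w, g w := by
    rw [← lintegral_indicator measurableSet_ball]
    rw [← lintegral_add_left_eq_self
      (fun w => (ball z 1).indicator (fun w => ENNReal.ofReal ‖h w‖) w) z]
    congr 1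
    ext w
    by_cases hw : w ∈ ball (0:ℂ) 1
    · have hzw : z + w ∈ ball z 1 := by
        simpa [mem_ball, dist_eq_norm, add_sub_cancel_left] using mem_ball_zero_iff.mp hw
      simp [hg, indicator_of_mem hzw, indicator_of_mem hw]
    · have hzw : z + w ∉ ball z 1 := by
        simp only [mem_ball, dist_eq_norm, add_sub_cancel_left]
        simpa using fun hc => hw (mem_ball_zero_iff.mpr hc)
      simp [hg, indicator_of_notMem hzw, indicator_of_notMem hw]
  have step2 : ∫⁻ w, g w
      = ∫⁻ p in polarCoord.target, ENNReal.ofReal p.1 * g (Complex.polarCoord.symm p) :=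
    (Complex.lintegral_comp_polarCoord_symm_aux g).symm
  rw [step1, step2]
  have hsub : (Ioo (0:ℝ) 1 ×ˢ Ioo (-π) π) ⊆ polarCoord.target := by
    rw [polarCoord_target]
    exact Set.prod_mono (fun x hx => hx.1) subset_rfl
  refine le_trans ?_ (lintegral_mono_set hsub)
  -- on the smaller set, identify the integrand
  have hid : ∀ p ∈ Ioo (0:ℝ) 1 ×ˢ Ioo (-π) π,
      ENNReal.ofReal p.1 * g (Complex.polarCoord.symm p)
        = ENNReal.ofReal p.1 * ENNReal.ofReal ‖h (circleMap z p.1 p.2)‖ := by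
    rintro ⟨r, θ⟩ ⟨hr, hθ⟩
    have habs : ‖Complex.polarCoord.symm (r, θ)‖ = r := by
      rw [Complex.norm_polarCoord_symm]; exact abs_of_pos hr.1
    have hmem : Complex.polarCoord.symm (r, θ) ∈ ball (0:ℂ) 1 := by
      rw [mem_ball_zero_iff, habs]; exact hr.2
    have hcm : z + Complex.polarCoord.symm (r, θ) = circleMap z r θ := by
      rw [Complex.polarCoord_symm_apply, circleMap, Complex.exp_mul_I]
      push_cast
      ring
    simp only [hg, indicator_of_mem hmem, hcm]
  rw [setLIntegral_congr_fun (measurableSet_Ioo.prod measurableSet_Ioo)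
    hid]
  -- Tonelli
  have hFmeas : Measurable fun p : ℝ × ℝ =>
      ENNReal.ofReal p.1 * ENNReal.ofReal ‖h (circleMap z p.1 p.2)‖ := by
    apply Measurable.mul (f := fun p : ℝ × ℝ => ENNReal.ofReal p.1)
      (g := fun p : ℝ × ℝ => ENNReal.ofReal ‖h (circleMap z p.1 p.2)‖)
    · exact measurable_fst.ennreal_ofReal
    · apply Measurable.ennreal_ofReal
      apply Continuous.measurable
      apply Continuous.norm
      apply hcont.comp
      unfold circleMap
      fun_prop
  rw [Measure.volume_eq_prod, ← Measure.prod_restrict,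
    lintegral_prod _ hFmeas.aemeasurable]
  -- inner bound
  have inner_bd : ∀ r ∈ Ioo (0:ℝ) 1,
      ENNReal.ofReal r * ENNReal.ofReal (2 * π * ‖h z‖)
        ≤ ∫⁻ θ in Ioo (-π) π, ENNReal.ofReal r * ENNReal.ofReal ‖h (circleMap z r θ)‖ := by
    intro r hr
    rw [lintegral_const_mul' _ _ ENNReal.ofReal_ne_top]
    apply mul_le_mul_right
    set v : ℝ → ℝ := fun θ => ‖h (circleMap z r θ)‖ with hv
    have hvc : Continuous v := (hcont.comp (continuous_circleMap z r)).norm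
    have hvint : IntegrableOn v (Ioo (-π) π) :=
      (hvc.integrableOn_Icc).mono_set Ioo_subset_Icc_self
    rw [← ofReal_integral_eq_lintegral_ofReal hvint
      (Filter.Eventually.of_forall fun θ => norm_nonneg _)]
    apply ENNReal.ofReal_le_ofReal
    have hper : Function.Periodic v (2 * π) := fun θ => by
      simp [hv, periodic_circleMap z r θ]
    have e1 : ∫ θ in Ioo (-π) π, v θ = ∫ θ in (-π)..π, v θ := by
      rw [intervalIntegral.integral_of_le (by linarith [Real.pi_pos]),
        MeasureTheory.integral_Ioc_eq_integral_Ioo]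
    have e2 : ∫ θ in (-π)..π, v θ = ∫ θ in (0:ℝ)..(2*π), v θ := by
      have := hper.intervalIntegral_add_eq (-π) 0
      simpa [neg_add_cancel, two_mul] using this
    rw [e1, e2]
    exact circle_submean hd z hr.1
  calc ENNReal.ofReal (π * ‖h z‖)
      = (∫⁻ r in Ioo (0:ℝ) 1, ENNReal.ofReal r) * ENNReal.ofReal (2 * π * ‖h z‖) := by
        have : ∫⁻ r in Ioo (0:ℝ) 1, ENNReal.ofReal r = ENNReal.ofReal (1/2) := by
          have hrw := ofReal_integral_eq_lintegral_ofReal (f := fun r : ℝ => r)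
            (μ := volume.restrict (Ioo (0:ℝ) 1))
            ((continuous_id.integrableOn_Icc).mono_set Ioo_subset_Icc_self)
            (ae_restrict_of_forall_mem measurableSet_Ioo fun x hx => hx.1.le)
          rw [← hrw]
          congr 1
          rw [← MeasureTheory.integral_Ioc_eq_integral_Ioo,
            ← intervalIntegral.integral_of_le (by norm_num : (0:ℝ) ≤ 1)]
          simp [integral_id]
        rw [this, ← ENNReal.ofReal_mul (by norm_num)]
        congr 1
        ring
    _ = ∫⁻ r in Ioo (0:ℝ) 1, ENNReal.ofReal r * ENNReal.ofReal (2 * π * ‖h z‖) := by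
        rw [lintegral_mul_const' _ _ ENNReal.ofReal_ne_top]
    _ ≤ _ := setLIntegral_mono' measurableSet_Ioo inner_bd

theorem norm_H (f : ℂ → ℂ) (z w : ℂ) :
    ‖(f w * Complex.exp (-(↑π) * (starRingEnd ℂ z) * w))^2
        * Complex.exp ((↑π) * (starRingEnd ℂ z) * z)‖
      = ‖f w‖^2 * Real.exp (-π * ‖w‖^2) * Real.exp (π * ‖w - z‖^2) := by
  have hE : (-(↑π:ℂ) * (starRingEnd ℂ z) * w).re + (-(↑π:ℂ) * (starRingEnd ℂ z) * w).re
      + ((↑π:ℂ) * (starRingEnd ℂ z) * z).re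
      = -π * ‖w‖ ^ 2 + π * ‖w - z‖ ^ 2 := by
    simp only [Complex.sq_norm, Complex.normSq_apply, Complex.mul_re, Complex.mul_im,
      Complex.sub_re, Complex.sub_im, Complex.conj_re, Complex.conj_im, Complex.neg_re,
      Complex.neg_im, Complex.ofReal_re, Complex.ofReal_im]
    ring
  simp only [norm_mul, norm_pow, Complex.norm_exp]
  rw [mul_pow, sq (Real.exp _), ← Real.exp_add]
  rw [mul_assoc (‖f w‖ ^ 2), ← Real.exp_add, hE, Real.exp_add, ← mul_assoc]

theorem pointwise_bound {f : ℂ → ℂ} (hf : Differentiable ℂ f) (z : ℂ) :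
    ENNReal.ofReal π * ENNReal.ofReal (‖f z‖^2 * Real.exp (-π * ‖z‖^2))
      ≤ ENNReal.ofReal (Real.exp π) *
        ∫⁻ w in ball z 1, ENNReal.ofReal (‖f w‖^2 * Real.exp (-π * ‖w‖^2)) := by
  set H : ℂ → ℂ := fun w => (f w * Complex.exp (-(↑π) * (starRingEnd ℂ z) * w))^2
    * Complex.exp ((↑π) * (starRingEnd ℂ z) * z) with hH
  have hHd : Differentiable ℂ H := by
    apply Differentiable.mul _ (differentiable_const _)
    apply Differentiable.pow
    exact hf.mul ((differentiable_id.const_mul _).cexp)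
  have h0 : ‖H z‖ = ‖f z‖^2 * Real.exp (-π * ‖z‖^2) := by
    rw [hH]
    simp only
    rw [norm_H]
    simp
  calc ENNReal.ofReal π * ENNReal.ofReal (‖f z‖^2 * Real.exp (-π*‖z‖^2))
      = ENNReal.ofReal (π * ‖H z‖) := by rw [h0, ← ENNReal.ofReal_mul Real.pi_pos.le]
    _ ≤ ∫⁻ w in ball z 1, ENNReal.ofReal ‖H w‖ := ball_submean hHd z
    _ ≤ ∫⁻ w in ball z 1, ENNReal.ofReal (Real.exp π)
          * ENNReal.ofReal (‖f w‖^2 * Real.exp (-π * ‖w‖^2)) := by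
        apply setLIntegral_mono' measurableSet_ball
        intro w hw
        rw [hH]
        simp only
        rw [norm_H, ← ENNReal.ofReal_mul (Real.exp_pos π).le]
        apply ENNReal.ofReal_le_ofReal
        have h2 : Real.exp (π * ‖w - z‖^2) ≤ Real.exp π := by
          apply Real.exp_le_exp.mpr
          have h3 : ‖w - z‖ < 1 := by rwa [← dist_eq_norm, ← mem_ball]
          have h4 : ‖w - z‖^2 ≤ 1 := by nlinarith [norm_nonneg (w - z)]
          nlinarith [Real.pi_pos]
        nlinarith [mul_nonneg (sq_nonneg ‖f w‖) (Real.exp_pos (-π*‖w‖^2)).le]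
    _ = ENNReal.ofReal (Real.exp π)
          * ∫⁻ w in ball z 1, ENNReal.ofReal (‖f w‖^2 * Real.exp (-π * ‖w‖^2)) :=
        lintegral_const_mul' _ _ ENNReal.ofReal_ne_top

noncomputable def ctr (k : ℤ × ℤ) : ℂ := (4 * k.1 : ℝ) + (4 * k.2 : ℝ) * Complex.I

theorem ctr_dist {k l : ℤ × ℤ} (h : k ≠ l) : 4 ≤ dist (ctr k) (ctr l) := by
  have hre : (ctr k - ctr l).re = 4 * (k.1 - l.1 : ℝ) := by
    simp [ctr, Complex.sub_re, Complex.add_re, Complex.mul_re]; ring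
  have him : (ctr k - ctr l).im = 4 * (k.2 - l.2 : ℝ) := by
    simp [ctr, Complex.sub_im, Complex.add_im, Complex.mul_im]; ring
  rw [dist_eq_norm]
  by_cases h1 : k.1 = l.1
  · have h2 : k.2 ≠ l.2 := fun h2 => h (Prod.ext h1 h2)
    refine le_trans ?_ (Complex.abs_im_le_norm _)
    rw [him, abs_mul, abs_of_nonneg (by norm_num : (0:ℝ) ≤ 4)]
    have h3 : (1:ℝ) ≤ |(k.2 - l.2 : ℝ)| := by
      rw [show ((k.2 : ℝ) - l.2) = ((k.2 - l.2 : ℤ) : ℝ) by push_cast; ring, ← Int.cast_abs]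
      exact_mod_cast Int.one_le_abs (sub_ne_zero.mpr h2)
    nlinarith
  · refine le_trans ?_ (Complex.abs_re_le_norm _)
    rw [hre, abs_mul, abs_of_nonneg (by norm_num : (0:ℝ) ≤ 4)]
    have h3 : (1:ℝ) ≤ |(k.1 - l.1 : ℝ)| := by
      rw [show ((k.1 : ℝ) - l.1) = ((k.1 - l.1 : ℤ) : ℝ) by push_cast; ring, ← Int.cast_abs]
      exact_mod_cast Int.one_le_abs (sub_ne_zero.mpr h1)
    nlinarith

noncomputable def OmegaSet (ρ : ℝ) : Set ℂ := ⋃ k : ℤ × ℤ, closedBall (ctr k) ρ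

theorem omega_meas (ρ : ℝ) : MeasurableSet (OmegaSet ρ) :=
  MeasurableSet.iUnion fun _ => measurableSet_closedBall

theorem omega_volume_top {ρ : ℝ} (hρ : 0 < ρ) (hρ1 : ρ ≤ 1) : volume (OmegaSet ρ) = ⊤ := by
  have hdisj : Pairwise (Function.onFun Disjoint fun k => closedBall (ctr k) ρ) := by
    intro k l hkl
    apply closedBall_disjoint_closedBall
    calc ρ + ρ ≤ 1 + 1 := by linarith
      _ < 4 := by norm_num
      _ ≤ dist (ctr k) (ctr l) := ctr_dist hkl
  rw [OmegaSet, measure_iUnion hdisj fun _ => measurableSet_closedBall]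
  simp only [Complex.volume_closedBall]
  rw [ENNReal.tsum_const_eq_top_of_ne_zero]
  apply mul_ne_zero
  · exact pow_ne_zero _ (ENNReal.ofReal_pos.mpr hρ).ne'
  · exact ENNReal.coe_ne_zero.mpr (by
      rw [← NNReal.coe_ne_zero, NNReal.coe_real_pi]
      exact Real.pi_ne_zero)

theorem omega_cap_ball {ρ : ℝ} (hρ : 0 < ρ) (hρ1 : ρ ≤ 1) (w : ℂ) :
    volume (ball w 1 ∩ OmegaSet ρ) ≤ ENNReal.ofReal ρ ^ 2 * NNReal.pi := by
  by_cases hne : ∃ k, (ball w 1 ∩ closedBall (ctr k) ρ).Nonempty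
  · obtain ⟨k0, hk0⟩ := hne
    have hsub : ball w 1 ∩ OmegaSet ρ ⊆ closedBall (ctr k0) ρ := by
      rintro x ⟨hx1, hx2⟩
      obtain ⟨t, ⟨l, rfl⟩, hxl⟩ := hx2
      have : l = k0 := by
        by_contra hne'
        obtain ⟨y, hy1, hy2⟩ := hk0
        have d1 : dist w (ctr l) < 1 + ρ :=
          lt_of_le_of_lt (dist_triangle w x (ctr l)) (by
            have := mem_ball.mp hx1
            have := mem_closedBall.mp hxl
            rw [dist_comm w x]
            linarith)
        have d2 : dist w (ctr k0) < 1 + ρ :=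
          lt_of_le_of_lt (dist_triangle w y (ctr k0)) (by
            have := mem_ball.mp hy1
            have := mem_closedBall.mp hy2
            rw [dist_comm w y]
            linarith)
        have d3 : dist (ctr l) (ctr k0) < 4 :=
          lt_of_le_of_lt (dist_triangle_left (ctr l) (ctr k0) w) (by linarith)
        exact absurd d3 (not_lt.mpr (ctr_dist hne'))
      rwa [this] at hxl
    calc volume (ball w 1 ∩ OmegaSet ρ) ≤ volume (closedBall (ctr k0) ρ) := measure_mono hsub
      _ = ENNReal.ofReal ρ ^ 2 * NNReal.pi := Complex.volume_closedBall _ _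
  · have : ball w 1 ∩ OmegaSet ρ = ∅ := by
      push_neg at hne
      rw [eq_empty_iff_forall_notMem]
      rintro x ⟨hx1, hx2⟩
      obtain ⟨t, ⟨l, rfl⟩, hxl⟩ := hx2
      exact eq_empty_iff_forall_notMem.mp (hne l) x ⟨hx1, hxl⟩
    rw [this]
    simp

/-- For every `ε > 0` there is a measurable set `Ω ⊆ ℂ` of infinite Lebesgue measure such that
`∫_Ω |f|² dλ ≤ ε ∫_ℂ |f|² dλ` for every entire function `f`. -/
theorem exists_infinite_measure_set_small_concentration :
    ∀ ε : ℝ, 0 < ε → ∃ Ω : Set ℂ, MeasurableSet Ω ∧ volume Ω = ⊤ ∧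
      ∀ f : ℂ → ℂ, Differentiable ℂ f →
        ∫⁻ z in Ω, ENNReal.ofReal (‖f z‖ ^ 2 * Real.exp (-Real.pi * ‖z‖ ^ 2))
          ≤ ENNReal.ofReal ε *
            ∫⁻ z : ℂ, ENNReal.ofReal (‖f z‖ ^ 2 * Real.exp (-Real.pi * ‖z‖ ^ 2)) := by
  intro ε hε
  set ρ : ℝ := min 1 (Real.sqrt (ε / Real.exp π)) with hρdef
  have hρpos : 0 < ρ := lt_min one_pos (Real.sqrt_pos.mpr (div_pos hε (Real.exp_pos π)))
  have hρ1 : ρ ≤ 1 := min_le_left _ _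
  have hρsq : Real.exp π * ρ^2 ≤ ε := by
    have h1 : ρ ≤ Real.sqrt (ε / Real.exp π) := min_le_right _ _
    have h2 : ρ^2 ≤ ε / Real.exp π := by
      calc ρ^2 ≤ Real.sqrt (ε / Real.exp π)^2 := by nlinarith [hρpos.le]
        _ = ε / Real.exp π := Real.sq_sqrt (by positivity)
    calc Real.exp π * ρ^2 ≤ Real.exp π * (ε / Real.exp π) := by
          nlinarith [Real.exp_pos π]
      _ = ε := by field_simp
  refine ⟨OmegaSet ρ, omega_meas ρ, omega_volume_top hρpos hρ1, ?_⟩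
  intro f hf
  set U : ℂ → ℝ≥0∞ := fun w => ENNReal.ofReal (‖f w‖ ^ 2 * Real.exp (-Real.pi * ‖w‖ ^ 2))
    with hU
  have hUmeas : Measurable U := by
    apply Measurable.ennreal_ofReal
    apply Continuous.measurable
    have := hf.continuous
    fun_prop
  have hπ0 : (ENNReal.ofReal π) ≠ 0 := (ENNReal.ofReal_pos.mpr Real.pi_pos).ne'
  have hπt : (ENNReal.ofReal π) ≠ ⊤ := ENNReal.ofReal_ne_top
  have hpw : ∀ z, U z ≤ (ENNReal.ofReal π)⁻¹
      * (ENNReal.ofReal (Real.exp π) * ∫⁻ w in ball z 1, U w) := by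
    intro z
    have h := pointwise_bound hf z
    calc U z = (ENNReal.ofReal π)⁻¹ * (ENNReal.ofReal π * U z) := by
          rw [← mul_assoc, ENNReal.inv_mul_cancel hπ0 hπt, one_mul]
      _ ≤ _ := mul_le_mul_right h _
  -- the double integral, swapped
  have hswap : ∫⁻ z in OmegaSet ρ, ∫⁻ w in ball z 1, U w
      = ∫⁻ w, U w * volume (ball w 1 ∩ OmegaSet ρ) := by
    have hS : MeasurableSet {p : ℂ × ℂ | dist p.2 p.1 < 1} :=
      (isOpen_lt (continuous_snd.dist continuous_fst) continuous_const).measurableSet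
    have hKmeas : Measurable (Function.uncurry fun z w : ℂ => (ball z 1).indicator U w) := by
      have heq : (Function.uncurry fun z w : ℂ => (ball z 1).indicator U w)
          = {p : ℂ × ℂ | dist p.2 p.1 < 1}.indicator (fun p => U p.2) := by
        ext ⟨z, w⟩
        by_cases hd : dist w z < 1 <;>
          simp [Function.uncurry, Set.indicator, mem_ball, hd]
      rw [heq]
      exact (hUmeas.comp measurable_snd).indicator hS
    calc ∫⁻ z in OmegaSet ρ, ∫⁻ w in ball z 1, U w
        = ∫⁻ z in OmegaSet ρ, ∫⁻ w, (ball z 1).indicator U w := by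
          simp_rw [lintegral_indicator measurableSet_ball]
      _ = ∫⁻ w, ∫⁻ z in OmegaSet ρ, (ball z 1).indicator U w :=
          lintegral_lintegral_swap hKmeas.aemeasurable
      _ = ∫⁻ w, U w * volume (ball w 1 ∩ OmegaSet ρ) := by
          congr 1
          funext w
          have : ∀ z, (ball z 1).indicator U w = (ball w 1).indicator (fun _ => U w) z := by
            intro z
            by_cases hd : dist w z < 1
            · rw [indicator_of_mem (mem_ball.mpr hd),
                indicator_of_mem (mem_ball.mpr (by rwa [dist_comm]))]
            · rw [indicator_of_notMem (fun hc => hd (mem_ball.mp hc)),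
                indicator_of_notMem
                  (fun hc => hd (by rw [dist_comm]; exact mem_ball.mp hc))]
          simp_rw [this]
          rw [lintegral_indicator measurableSet_ball, setLIntegral_const,
            Measure.restrict_apply measurableSet_ball]
  calc ∫⁻ z in OmegaSet ρ, U z
      ≤ ∫⁻ z in OmegaSet ρ, (ENNReal.ofReal π)⁻¹
          * (ENNReal.ofReal (Real.exp π) * ∫⁻ w in ball z 1, U w) :=
        lintegral_mono fun z => hpw z
    _ = (ENNReal.ofReal π)⁻¹ * (ENNReal.ofReal (Real.exp π)
          * ∫⁻ z in OmegaSet ρ, ∫⁻ w in ball z 1, U w) := by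
        rw [lintegral_const_mul' _ _ (ENNReal.inv_ne_top.mpr hπ0),
          lintegral_const_mul' _ _ ENNReal.ofReal_ne_top]
    _ = (ENNReal.ofReal π)⁻¹ * (ENNReal.ofReal (Real.exp π)
          * ∫⁻ w, U w * volume (ball w 1 ∩ OmegaSet ρ)) := by rw [hswap]
    _ ≤ (ENNReal.ofReal π)⁻¹ * (ENNReal.ofReal (Real.exp π)
          * ((∫⁻ w, U w) * (ENNReal.ofReal ρ ^ 2 * NNReal.pi))) := by
        apply mul_le_mul_right
        apply mul_le_mul_right
        rw [← lintegral_mul_const' _ _ (by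
          exact ENNReal.mul_ne_top (by simp [ENNReal.pow_ne_top]) ENNReal.coe_ne_top)]
        exact lintegral_mono fun w => mul_le_mul_right (omega_cap_ball hρpos hρ1 w) _
    _ ≤ ENNReal.ofReal ε * ∫⁻ z, U z := by
        have hpi : (NNReal.pi : ℝ≥0∞) = ENNReal.ofReal π := by
          rw [← ENNReal.ofReal_coe_nnreal, NNReal.coe_real_pi]
        rw [hpi, ← ENNReal.ofReal_pow hρpos.le]
        have harr : ∀ T : ℝ≥0∞, (ENNReal.ofReal π)⁻¹ * (ENNReal.ofReal (Real.exp π)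
            * (T * (ENNReal.ofReal (ρ^2) * ENNReal.ofReal π)))
            = ((ENNReal.ofReal π)⁻¹ * ENNReal.ofReal π)
              * ((ENNReal.ofReal (Real.exp π) * ENNReal.ofReal (ρ^2)) * T) := fun T => by ring
        rw [harr, ENNReal.inv_mul_cancel hπ0 hπt, one_mul,
          ← ENNReal.ofReal_mul (Real.exp_pos π).le]
        exact mul_le_mul_left (ENNReal.ofReal_le_ofReal hρsq) _
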